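/- Let r₁, r₂, r₃, r₄ > 1 be target values for the sensitivity parameters RR_{UY|T=1}, RR_{UY|T=0}, RR_{SU|T=1}, RR_{SU|T=0}, and let π ∈ (0,1), σ₀, σ₁ ∈ (0,1), p₀, p₁ ∈ (0,1) be target observed quantities. Then there exists a joint distribution of (Y, T, U, S) with Y, T, S valued in {0,1} and U valued in {0,1,2}, with all conditioning events below of positive probability, such that: (i) P(T=1) = π; (ii) P(S=1|T=t) = σ_t for t = 0,1; (iii) P(Y=1|T=t, S=1) = p_t for t = 0,1; (iv) Y is conditionally independent of S given (T,U); and (v) RR_{UY|T=1} = r₁, RR_{UY|T=0} = r₂, RR_{SU|T=1} = r₃, RR_{SU|T=0} = r₄. In particular, the four sensitivity parameters are variation independent: they are not restricted by each other or by the observed quantities. -/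

import Mathlib

open Finset

namespace Stmt2

/- `P y t u s` is the joint pmf of `(Y, T, U, S)` with `Y, T, S` Boolean
(`true` encoding `1`) and `U` valued in `Fin 3`. -/
variable (P : Bool → Bool → Fin 3 → Bool → ℝ)

/-- `P(T = t)`. -/
noncomputable def mT (t : Bool) : ℝ := ∑ y : Bool, ∑ u : Fin 3, ∑ s : Bool, P y t u s

/-- `P(T = t, U = u)`. -/
noncomputable def mTU (t : Bool) (u : Fin 3) : ℝ := ∑ y : Bool, ∑ s : Bool, P y t u s

/-- `P(T = t, S = s)`. -/
noncomputable def mTS (t s : Bool) : ℝ := ∑ y : Bool, ∑ u : Fin 3, P y t u s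

/-- `P(Y = y, T = t, U = u)`. -/
noncomputable def mYTU (y t : Bool) (u : Fin 3) : ℝ := ∑ s : Bool, P y t u s

/-- `P(T = t, U = u, S = s)`. -/
noncomputable def mTUS (t : Bool) (u : Fin 3) (s : Bool) : ℝ := ∑ y : Bool, P y t u s

/-- `P(Y = y, T = t, S = s)`. -/
noncomputable def mYTS (y t s : Bool) : ℝ := ∑ u : Fin 3, P y t u s

/-- `P(Y = 1 | T = t, U = u)`. -/
noncomputable def pY1gTU (t : Bool) (u : Fin 3) : ℝ := mYTU P true t u / mTU P t u

/-- `P(U = u | T = t, S = s)`. -/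
noncomputable def pUgTS (t : Bool) (u : Fin 3) (s : Bool) : ℝ := mTUS P t u s / mTS P t s

end Stmt2

lemma sup3 (f : Fin 3 → ℝ) :
    (univ : Finset (Fin 3)).sup' univ_nonempty f = max (max (f 0) (f 1)) (f 2) := by
  apply le_antisymm
  · refine Finset.sup'_le _ _ fun i _ => ?_
    fin_cases i
    · exact le_max_of_le_left (le_max_left _ _)
    · exact le_max_of_le_left (le_max_right _ _)
    · exact le_max_right _ _
  · exact max_le (max_le (Finset.le_sup' f (mem_univ 0)) (Finset.le_sup' f (mem_univ 1)))
      (Finset.le_sup' f (mem_univ 2))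

lemma inf3 (f : Fin 3 → ℝ) :
    (univ : Finset (Fin 3)).inf' univ_nonempty f = min (min (f 0) (f 1)) (f 2) := by
  apply le_antisymm
  · exact le_min (le_min (Finset.inf'_le f (mem_univ 0)) (Finset.inf'_le f (mem_univ 1)))
      (Finset.inf'_le f (mem_univ 2))
  · refine Finset.le_inf' _ _ fun i _ => ?_
    fin_cases i
    · exact min_le_of_left_le (min_le_left _ _)
    · exact min_le_of_left_le (min_le_right _ _)
    · exact min_le_right _ _

set_option maxHeartbeats 2000000 in
open Stmt2 in
theorem stmt2 (r₁ r₂ r₃ r₄ π σ₀ σ₁ p₀ p₁ : ℝ)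
    (hr₁ : 1 < r₁) (hr₂ : 1 < r₂) (hr₃ : 1 < r₃) (hr₄ : 1 < r₄)
    (hπ : π ∈ Set.Ioo (0 : ℝ) 1) (hσ₀ : σ₀ ∈ Set.Ioo (0 : ℝ) 1)
    (hσ₁ : σ₁ ∈ Set.Ioo (0 : ℝ) 1) (hp₀ : p₀ ∈ Set.Ioo (0 : ℝ) 1)
    (hp₁ : p₁ ∈ Set.Ioo (0 : ℝ) 1) :
    ∃ P : Bool → Bool → Fin 3 → Bool → ℝ,
      (∀ y t u s, 0 ≤ P y t u s) ∧
      (∑ y : Bool, ∑ t : Bool, ∑ u : Fin 3, ∑ s : Bool, P y t u s = 1) ∧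
      (∀ t, 0 < mT P t) ∧ (∀ t u, 0 < mTU P t u) ∧
      (∀ t s, 0 < mTS P t s) ∧ (∀ t u s, 0 < mTUS P t u s) ∧
      -- (i) P(T = 1) = π
      mT P true = π ∧
      -- (ii) P(S = 1 | T = t) = σ_t
      mTS P false true / mT P false = σ₀ ∧
      mTS P true true / mT P true = σ₁ ∧
      -- (iii) P(Y = 1 | T = t, S = 1) = p_t
      mYTS P true false true / mTS P false true = p₀ ∧
      mYTS P true true true / mTS P true true = p₁ ∧
      -- (iv) Y ⟂ S | (T, U)
      (∀ y t u s, P y t u s * mTU P t u = mYTU P y t u * mTUS P t u s) ∧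
      -- (v) the four sensitivity parameters attain the targets
      (univ.sup' univ_nonempty (pY1gTU P true)) /
        (univ.inf' univ_nonempty (pY1gTU P true)) = r₁ ∧
      (univ.sup' univ_nonempty (pY1gTU P false)) /
        (univ.inf' univ_nonempty (pY1gTU P false)) = r₂ ∧
      univ.sup' univ_nonempty
        (fun u : Fin 3 => pUgTS P true u true / pUgTS P true u false) = r₃ ∧
      univ.sup' univ_nonempty
        (fun u : Fin 3 => pUgTS P false u false / pUgTS P false u true) = r₄ := by
  obtain ⟨hπ0, hπ1⟩ := hπ
  obtain ⟨hσ₀0, hσ₀1⟩ := hσ₀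
  obtain ⟨hσ₁0, hσ₁1⟩ := hσ₁
  obtain ⟨hp₀0, hp₀1⟩ := hp₀
  obtain ⟨hp₁0, hp₁1⟩ := hp₁
  set R : Bool → ℝ := fun t => cond t r₁ r₂ with hRdef
  set pt : Bool → ℝ := fun t => cond t p₁ p₀ with hptdef
  set sg : Bool → ℝ := fun t => cond t σ₁ σ₀ with hsgdef
  set w : Bool → ℝ := fun t => cond t π (1 - π) with hwdef
  have hR1 : ∀ t, 1 < R t := by intro t; cases t <;> simp [hRdef] <;> assumption
  have hRpos : ∀ t, (0:ℝ) < R t := fun t => lt_trans one_pos (hR1 t)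
  have hpt0 : ∀ t, 0 < pt t := by intro t; cases t <;> simp [hptdef] <;> assumption
  have hpt1 : ∀ t, pt t < 1 := by intro t; cases t <;> simp [hptdef] <;> assumption
  have hsg0 : ∀ t, 0 < sg t := by intro t; cases t <;> simp [hsgdef] <;> assumption
  have hsg1 : ∀ t, sg t < 1 := by intro t; cases t <;> simp [hsgdef] <;> assumption
  have hw0 : ∀ t, 0 < w t := by intro t; cases t <;> simp [hwdef] <;> linarith
  clear_value R pt sg w
  set Mv : Bool → ℝ := fun t => pt t * (2 * R t - 1 - pt t * (R t - 1)) / R t with hMvdef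
  have hMvt : ∀ t, Mv t = pt t * (2 * R t - 1 - pt t * (R t - 1)) / R t := by
    intro t; simp [hMvdef]
  clear_value Mv
  have hpM : ∀ t, pt t < Mv t := by
    intro t; rw [hMvt t, lt_div_iff₀ (hRpos t)]
    nlinarith [hpt0 t, hpt1 t, hR1 t, mul_pos (hpt0 t) (sub_pos.2 (hR1 t))]
  have hM1 : ∀ t, Mv t < 1 := by
    intro t; rw [hMvt t, div_lt_one (hRpos t)]
    have h1 : (0:ℝ) < 1 - pt t := by linarith [hpt1 t]
    have h2 : (0:ℝ) < R t - pt t * (R t - 1) := by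
      nlinarith [hpt1 t, hR1 t, hpt0 t, mul_pos (sub_pos.2 (hpt1 t)) (sub_pos.2 (hR1 t))]
    nlinarith [mul_pos h1 h2]
  have hMpos : ∀ t, 0 < Mv t := fun t => (hpt0 t).trans (hpM t)
  have hmp : ∀ t, Mv t / R t < pt t := by
    intro t; rw [div_lt_iff₀ (hRpos t), hMvt t, div_lt_iff₀ (hRpos t)]
    nlinarith [mul_pos (hpt0 t) (mul_pos (hpt0 t) (sub_pos.2 (hR1 t))),
      mul_pos (hpt0 t) (mul_pos (sub_pos.2 (hR1 t)) (sub_pos.2 (hR1 t)))]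
  have hm0 : ∀ t, 0 < Mv t / R t := fun t => div_pos (hMpos t) (hRpos t)
  set dv : Bool → ℝ := fun t => Mv t - Mv t / R t with hdvdef
  have hdvt : ∀ t, dv t = Mv t - Mv t / R t := by intro t; simp [hdvdef]
  clear_value dv
  have hdpos : ∀ t, 0 < dv t := by
    intro t; rw [hdvt t]; linarith [hmp t, hpM t]
  set K : ℝ := 2 * (r₃ + r₄) with hKdef
  have hK4 : 4 < K := by rw [hKdef]; linarith
  have hK0 : (0:ℝ) < K := by linarith
  have hK1 : 1 / K < 1 := by rw [div_lt_one hK0]; linarith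
  have hK1' : 0 < 1 / K := by positivity
  clear_value K
  set q : Bool → Fin 3 → ℝ := fun t => ![Mv t / R t, Mv t, pt t] with hqdef
  set a : Bool → Fin 3 → ℝ := fun t =>
    ![(Mv t - pt t) / (K * dv t), (pt t - Mv t / R t) / (K * dv t), 1 - 1 / K] with hadef
  have hq0 : ∀ t, q t 0 = Mv t / R t := by intro t; simp [hqdef]
  have hq1 : ∀ t, q t 1 = Mv t := by intro t; simp [hqdef]
  have hq2 : ∀ t, q t 2 = pt t := by intro t; simp [hqdef]
  have ha0 : ∀ t, a t 0 = (Mv t - pt t) / (K * dv t) := by intro t; simp [hadef]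
  have ha1 : ∀ t, a t 1 = (pt t - Mv t / R t) / (K * dv t) := by intro t; simp [hadef]
  have ha2 : ∀ t, a t 2 = 1 - 1 / K := by intro t; simp [hadef]
  clear_value q a
  have ha0pos : ∀ t, 0 < a t 0 := by
    intro t; rw [ha0 t]
    exact div_pos (by linarith [hpM t]) (mul_pos hK0 (hdpos t))
  have ha1pos : ∀ t, 0 < a t 1 := by
    intro t; rw [ha1 t]
    exact div_pos (by linarith [hmp t]) (mul_pos hK0 (hdpos t))
  have ha2pos : ∀ t, 0 < a t 2 := by intro t; rw [ha2 t]; linarith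
  have hapos : ∀ t u, 0 < a t u := by
    intro t u; fin_cases u
    exacts [ha0pos t, ha1pos t, ha2pos t]
  have ha01 : ∀ t, a t 0 + a t 1 = 1 / K := by
    intro t
    rw [ha0 t, ha1 t, ← add_div,
      show Mv t - pt t + (pt t - Mv t / R t) = dv t from by rw [hdvt t]; ring,
      mul_comm K (dv t), ← div_div, div_self (hdpos t).ne']
  have hasum : ∀ t, a t 0 + a t 1 + a t 2 = 1 := by
    intro t; rw [ha2 t]; linarith [ha01 t]
  have ha0K : ∀ t, a t 0 < 1 / K := by intro t; linarith [ha01 t, ha1pos t]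
  set b : Bool → Fin 3 → ℝ := fun t => cond t
      ![a true 0 / r₃, a true 1, a true 2 + a true 0 * (1 - 1 / r₃)]
      ![r₄ * a false 0, a false 1, a false 2 - (r₄ - 1) * a false 0] with hbdef
  have hbt0 : b true 0 = a true 0 / r₃ := by simp [hbdef]
  have hbt1 : b true 1 = a true 1 := by simp [hbdef]
  have hbt2 : b true 2 = a true 2 + a true 0 * (1 - 1 / r₃) := by simp [hbdef]
  have hbf0 : b false 0 = r₄ * a false 0 := by simp [hbdef]
  have hbf1 : b false 1 = a false 1 := by simp [hbdef]
  have hbf2 : b false 2 = a false 2 - (r₄ - 1) * a false 0 := by simp [hbdef]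
  clear_value b
  have hr₃0 : (0:ℝ) < r₃ := by linarith
  have hr₄0 : (0:ℝ) < r₄ := by linarith
  have hir₃ : 1 / r₃ < 1 := by rw [div_lt_one hr₃0]; exact hr₃
  have hir₃0 : 0 < 1 / r₃ := by positivity
  have hbf2pos : 0 < b false 2 := by
    rw [hbf2, ha2 false]
    have h1 : (r₄ - 1) * a false 0 < (r₄ - 1) * (1 / K) :=
      mul_lt_mul_of_pos_left (ha0K false) (by linarith)
    have h2 : r₄ * (1 / K) < 1 := by
      rw [mul_one_div, div_lt_one hK0, hKdef]; linarith
    nlinarith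
  have hbpos : ∀ t u, 0 < b t u := by
    intro t u
    cases t <;> fin_cases u
    · show 0 < b false 0; rw [hbf0]; exact mul_pos hr₄0 (ha0pos false)
    · show 0 < b false 1; rw [hbf1]; exact ha1pos false
    · exact hbf2pos
    · show 0 < b true 0; rw [hbt0]; exact div_pos (ha0pos true) hr₃0
    · show 0 < b true 1; rw [hbt1]; exact ha1pos true
    · show 0 < b true 2; rw [hbt2]; nlinarith [ha2pos true, ha0pos true]
  have hbsum : ∀ t, b t 0 + b t 1 + b t 2 = 1 := by
    intro t; cases t
    · rw [hbf0, hbf1, hbf2]; linear_combination hasum false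
    · rw [hbt0, hbt1, hbt2]
      have h : a true 0 / r₃ + a true 0 * (1 - 1 / r₃) = a true 0 := by
        field_simp
        ring
      linarith [hasum true]
  have hsumaq : ∀ t, a t 0 * q t 0 + a t 1 * q t 1 + a t 2 * q t 2 = pt t := by
    intro t
    have hKne := hK0.ne'
    have hRne := (hRpos t).ne'
    have hMne := (hMpos t).ne'
    have hR1' : R t - 1 ≠ 0 := by have := hR1 t; intro h; linarith
    rw [ha0 t, ha1 t, ha2 t, hq0 t, hq1 t, hq2 t, hdvt t,
      show Mv t - Mv t / R t = Mv t * (R t - 1) / R t from by field_simp]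
    field_simp
    ring
  -- the joint distribution
  set P : Bool → Bool → Fin 3 → Bool → ℝ := fun y t u s =>
    w t * (cond s (sg t * a t u) ((1 - sg t) * b t u)) * (cond y (q t u) (1 - q t u))
    with hPdef
  clear_value P
  have hq01 : ∀ t u, 0 < q t u ∧ q t u < 1 := by
    intro t u; fin_cases u
    · show 0 < q t 0 ∧ q t 0 < 1
      rw [hq0 t]; exact ⟨hm0 t, by linarith [hmp t, hpt1 t]⟩
    · show 0 < q t 1 ∧ q t 1 < 1
      rw [hq1 t]; exact ⟨hMpos t, hM1 t⟩
    · show 0 < q t 2 ∧ q t 2 < 1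
      rw [hq2 t]; exact ⟨hpt0 t, hpt1 t⟩
  have hPpos : ∀ y t u s, 0 < P y t u s := by
    intro y t u s
    have h2 := (hq01 t u).1; have h3 := (hq01 t u).2
    have h4 := hsg0 t; have h5 := hsg1 t
    simp only [hPdef]
    cases y <;> cases s <;> simp only [Bool.cond_true, Bool.cond_false]
    · exact mul_pos (mul_pos (hw0 t) (mul_pos (by linarith) (hbpos t u))) (by linarith)
    · exact mul_pos (mul_pos (hw0 t) (mul_pos h4 (hapos t u))) (by linarith)
    · exact mul_pos (mul_pos (hw0 t) (mul_pos (by linarith) (hbpos t u))) h2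
    · exact mul_pos (mul_pos (hw0 t) (mul_pos h4 (hapos t u))) h2
  -- marginals
  have hTUS : ∀ t u s, mTUS P t u s = w t * (cond s (sg t * a t u) ((1 - sg t) * b t u)) := by
    intro t u s
    simp only [Stmt2.mTUS, Fintype.sum_bool, hPdef, Bool.cond_true, Bool.cond_false]
    ring
  have hYTU : ∀ y t u, mYTU P y t u =
      (cond y (q t u) (1 - q t u)) * (w t * (sg t * a t u + (1 - sg t) * b t u)) := by
    intro y t u
    simp only [Stmt2.mYTU, Fintype.sum_bool, hPdef, Bool.cond_true, Bool.cond_false]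
    ring
  have hTU : ∀ t u, mTU P t u = w t * (sg t * a t u + (1 - sg t) * b t u) := by
    intro t u
    simp only [Stmt2.mTU, Fintype.sum_bool, hPdef, Bool.cond_true, Bool.cond_false]
    ring
  have hTUpos : ∀ t u, 0 < mTU P t u := by
    intro t u; rw [hTU t u]
    have h4 := hsg0 t; have h5 := hsg1 t
    exact mul_pos (hw0 t) (by nlinarith [hapos t u, hbpos t u])
  have hTS : ∀ t s, mTS P t s = w t * (cond s (sg t) (1 - sg t)) := by
    intro t s
    cases s <;>
      simp only [Stmt2.mTS, Fin.sum_univ_three, Fintype.sum_bool, hPdef,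
        Bool.cond_true, Bool.cond_false]
    · linear_combination (w t * (1 - sg t)) * hbsum t
    · linear_combination (w t * sg t) * hasum t
  have hT : ∀ t, mT P t = w t := by
    intro t
    simp only [Stmt2.mT, Fin.sum_univ_three, Fintype.sum_bool, hPdef,
      Bool.cond_true, Bool.cond_false]
    linear_combination (w t * sg t) * hasum t + (w t * (1 - sg t)) * hbsum t
  have hYTS : ∀ t, mYTS P true t true = w t * sg t * pt t := by
    intro t
    simp only [Stmt2.mYTS, Fin.sum_univ_three, Fintype.sum_bool, hPdef,
      Bool.cond_true, Bool.cond_false]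
    linear_combination (w t * sg t) * hsumaq t
  have hTSpos : ∀ t s, 0 < mTS P t s := by
    intro t s; rw [hTS t s]
    cases s <;> simp only [Bool.cond_true, Bool.cond_false]
    · exact mul_pos (hw0 t) (by linarith [hsg1 t])
    · exact mul_pos (hw0 t) (hsg0 t)
  have hpq : ∀ t u, pY1gTU P t u = q t u := by
    intro t u
    rw [Stmt2.pY1gTU, hYTU true t u, ← hTU t u, Bool.cond_true, mul_div_assoc,
      div_self (hTUpos t u).ne', mul_one]
  have hUgTS : ∀ t u s, pUgTS P t u s = cond s (a t u) (b t u) := by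
    intro t u s
    rw [Stmt2.pUgTS, hTUS t u s, hTS t s]
    cases s <;> simp only [Bool.cond_true, Bool.cond_false]
    · rw [show w t * ((1 - sg t) * b t u) = (w t * (1 - sg t)) * b t u from by ring]
      exact mul_div_cancel_left₀ _ (mul_pos (hw0 t) (by linarith [hsg1 t])).ne'
    · rw [show w t * (sg t * a t u) = (w t * sg t) * a t u from by ring]
      exact mul_div_cancel_left₀ _ (mul_pos (hw0 t) (hsg0 t)).ne'
  refine ⟨P, fun y t u s => (hPpos y t u s).le, ?_, ?_, hTUpos, hTSpos, ?_, ?_, ?_, ?_,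
    ?_, ?_, ?_, ?_, ?_, ?_, ?_⟩
  · -- total mass
    simp only [Fintype.sum_bool, Fin.sum_univ_three, hPdef, Bool.cond_true, Bool.cond_false,
      hwdef, hsgdef]
    linear_combination (π * σ₁) * hasum true + (π * (1 - σ₁)) * hbsum true
      + ((1 - π) * σ₀) * hasum false + ((1 - π) * (1 - σ₀)) * hbsum false
  · -- mT pos
    intro t; rw [hT t]; exact hw0 t
  · -- mTUS pos
    intro t u s; rw [hTUS t u s]
    cases s <;> simp only [Bool.cond_true, Bool.cond_false]
    · exact mul_pos (hw0 t) (mul_pos (by linarith [hsg1 t]) (hbpos t u))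
    · exact mul_pos (hw0 t) (mul_pos (hsg0 t) (hapos t u))
  · -- (i)
    rw [hT true]; simp [hwdef]
  · -- (ii) t = 0
    rw [hTS false true, hT false, Bool.cond_true]
    have hw' : w false = 1 - π := by simp [hwdef]
    have hs' : sg false = σ₀ := by simp [hsgdef]
    rw [hw', hs']
    exact mul_div_cancel_left₀ _ (by linarith : (1:ℝ) - π ≠ 0)
  · -- (ii) t = 1
    rw [hTS true true, hT true, Bool.cond_true]
    have hw' : w true = π := by simp [hwdef]
    have hs' : sg true = σ₁ := by simp [hsgdef]
    rw [hw', hs']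
    exact mul_div_cancel_left₀ _ (by linarith : π ≠ 0)
  · -- (iii) t = 0
    rw [hYTS false, hTS false true, Bool.cond_true,
      mul_div_cancel_left₀ _ (mul_pos (hw0 false) (hsg0 false)).ne']
    simp [hptdef]
  · -- (iii) t = 1
    rw [hYTS true, hTS true true, Bool.cond_true,
      mul_div_cancel_left₀ _ (mul_pos (hw0 true) (hsg0 true)).ne']
    simp [hptdef]
  · -- (iv)
    intro y t u s
    rw [hTU t u, hYTU y t u, hTUS t u s]
    simp only [hPdef]
    cases y <;> cases s <;> simp only [Bool.cond_true, Bool.cond_false] <;> ring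
  · -- RR_{UY|T=1} = r₁
    rw [sup3, inf3, hpq true 0, hpq true 1, hpq true 2, hq0, hq1, hq2,
      max_eq_right (by linarith [hmp true, hpM true] : Mv true / R true ≤ Mv true),
      max_eq_left (le_of_lt (hpM true)),
      min_eq_left (by linarith [hmp true, hpM true] : Mv true / R true ≤ Mv true),
      min_eq_left (le_of_lt (hmp true)),
      div_div_eq_mul_div, mul_comm (Mv true) (R true), mul_div_assoc,
      div_self (hMpos true).ne', mul_one]
    simp [hRdef]
  · -- RR_{UY|T=0} = r₂
    rw [sup3, inf3, hpq false 0, hpq false 1, hpq false 2, hq0, hq1, hq2,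
      max_eq_right (by linarith [hmp false, hpM false] : Mv false / R false ≤ Mv false),
      max_eq_left (le_of_lt (hpM false)),
      min_eq_left (by linarith [hmp false, hpM false] : Mv false / R false ≤ Mv false),
      min_eq_left (le_of_lt (hmp false)),
      div_div_eq_mul_div, mul_comm (Mv false) (R false), mul_div_assoc,
      div_self (hMpos false).ne', mul_one]
    simp [hRdef]
  · -- RR_{SU|T=1} = r₃
    simp only [sup3]
    simp only [hUgTS, Bool.cond_true, Bool.cond_false]
    rw [hbt0, hbt1, hbt2]
    have h0 : a true 0 / (a true 0 / r₃) = r₃ := by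
      rw [div_div_eq_mul_div, mul_comm (a true 0) r₃, mul_div_assoc,
        div_self (ha0pos true).ne', mul_one]
    have h1 : a true 1 / a true 1 = 1 := div_self (ha1pos true).ne'
    have h2 : a true 2 / (a true 2 + a true 0 * (1 - 1 / r₃)) ≤ 1 := by
      rw [div_le_one (by nlinarith [ha2pos true, ha0pos true])]
      nlinarith [ha0pos true]
    rw [h0, h1, max_eq_left hr₃.le, max_eq_left (by linarith)]
  · -- RR_{SU|T=0} = r₄
    simp only [sup3]
    simp only [hUgTS, Bool.cond_true, Bool.cond_false]
    rw [hbf0, hbf1, hbf2]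
    have h0 : r₄ * a false 0 / a false 0 = r₄ := by
      rw [mul_div_assoc, div_self (ha0pos false).ne', mul_one]
    have h1 : a false 1 / a false 1 = 1 := div_self (ha1pos false).ne'
    have h2 : (a false 2 - (r₄ - 1) * a false 0) / a false 2 ≤ 1 := by
      rw [div_le_one (ha2pos false)]
      nlinarith [ha0pos false]
    rw [h0, h1, max_eq_left hr₄.le, max_eq_left (by linarith)]
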